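/- Let L = GF(2^m), F = GF(2^{2m}), T : F → L the trace, σ = 2^s, l ∈ L* with l ∉ (L*)^{σ−1}, and C_1, C_2 ∈ F such that T(C_1 x x̄^σ + C_2 x^{σ+1}) ≠ 0 for all nonzero x ∈ F. Define x * y = T((C_1 y^σ + C_2 ȳ^σ)x) + l·T((C̄_1 y + C_2 ȳ) x^σ) + T(xy)·z, where 1, z is a basis of F over L with z^2 + z = μ, tr(μ) = 1. Then x * y = 0 implies x = 0 or y = 0; i.e., (F, +, *) is a presemifield. -/

import Mathlib

open Polynomial in
lemma fixed_mem (m : ℕ) (hm : 1 ≤ m) (L F : Type) [Field L] [Fintype L] [Field F] [Fintype F]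
    [Algebra L F] (hL : Fintype.card L = 2 ^ m)
    (x : F) (hx : x ^ (2 ^ m) = x) : ∃ c : L, algebraMap L F c = x := by
  classical
  set p : F[X] := X ^ (2 ^ m) - X with hp
  have h2m : 2 ≤ 2 ^ m := by
    calc 2 = 2 ^ 1 := (pow_one 2).symm
    _ ≤ 2 ^ m := Nat.pow_le_pow_right (by norm_num) hm
  have hpmon : p.Monic := by
    apply monic_X_pow_sub
    rw [degree_X]
    exact_mod_cast h2m
  have hpne : p ≠ 0 := hpmon.ne_zero
  have hdeg : p.natDegree ≤ 2 ^ m := by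
    apply le_trans (natDegree_sub_le _ _)
    simp only [natDegree_X_pow, natDegree_X]
    omega
  have hroots : p.roots.toFinset.card ≤ 2 ^ m :=
    le_trans (Multiset.toFinset_card_le _) (le_trans (Polynomial.card_roots' p) hdeg)
  have hmem : ∀ u : F, u ^ (2 ^ m) = u → u ∈ p.roots.toFinset := by
    intro u hu
    simp only [Multiset.mem_toFinset, mem_roots', IsRoot.def]
    exact ⟨hpne, by simp [hp, hu]⟩
  set S : Finset F := Finset.univ.image (algebraMap L F) with hS
  have hScard : S.card = 2 ^ m := by
    rw [hS, Finset.card_image_of_injective _ (algebraMap L F).injective, Finset.card_univ, hL]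
  have hSsub : S ⊆ p.roots.toFinset := by
    intro u hu
    rw [hS, Finset.mem_image] at hu
    obtain ⟨c, -, rfl⟩ := hu
    apply hmem
    rw [← map_pow]
    congr 1
    rw [← hL]
    exact FiniteField.pow_card c
  by_contra hcon
  push_neg at hcon
  have hxS : x ∉ S := by
    rw [hS, Finset.mem_image]
    rintro ⟨c, -, hc⟩
    exact hcon c hc
  have hins : (insert x S) ⊆ p.roots.toFinset := by
    intro u hu
    rcases Finset.mem_insert.mp hu with rfl | hu
    · exact hmem _ hx
    · exact hSsub hu
  have hcard := Finset.card_le_card hins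
  rw [Finset.card_insert_of_notMem hxS, hScard] at hcard
  omega

lemma trace_sq (L : Type) [Field L] [Finite L] [Algebra (ZMod 2) L]
    (hchar : CharP L 2) (w : L) :
    Algebra.trace (ZMod 2) L (w ^ 2) = Algebra.trace (ZMod 2) L w := by
  haveI := hchar
  let e : L ≃ₐ[ZMod 2] L :=
    AlgEquiv.ofRingEquiv (f := frobeniusEquiv L 2) (by
      intro c
      show (algebraMap (ZMod 2) L c) ^ 2 = algebraMap (ZMod 2) L c
      rw [← map_pow]
      congr 1
      exact ZMod.pow_card c)
  have := Algebra.trace_eq_of_algEquiv e w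
  simpa [e, AlgEquiv.ofRingEquiv, frobeniusEquiv_def, frobenius_def] using this

theorem stmt_11 (m s : ℕ) (hm : 1 ≤ m)
    (L F : Type) [Field L] [Fintype L] [Field F] [Fintype F] [Algebra L F]
    [Algebra (ZMod 2) L]
    (hL : Fintype.card L = 2 ^ m) (hF : Fintype.card F = 2 ^ (2 * m))
    (μ : L) (hμ : Algebra.trace (ZMod 2) L μ = 1)
    (z : F) (hz : z ^ 2 + z = algebraMap L F μ)
    (l : L) (hl : l ≠ 0) (hl' : ¬ ∃ c : L, c ≠ 0 ∧ l = c ^ (2 ^ s - 1))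
    (C1 C2 : F)
    (T : F → F) (hT : ∀ x, T x = x + x ^ (2 ^ m))
    (hC : ∀ x : F, x ≠ 0 →
        T (C1 * x * (x ^ (2 ^ m)) ^ (2 ^ s) + C2 * x ^ (2 ^ s + 1)) ≠ 0)
    (mul : F → F → F)
    (hmul : ∀ x y, mul x y =
      T ((C1 * y ^ (2 ^ s) + C2 * (y ^ (2 ^ m)) ^ (2 ^ s)) * x) +
        algebraMap L F l * T ((C1 ^ (2 ^ m) * y + C2 * y ^ (2 ^ m)) * x ^ (2 ^ s)) +
        T (x * y) * z) :
    ∀ x y : F, mul x y = 0 → x = 0 ∨ y = 0 := by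
  intro x y h
  by_cases hx : x = 0
  · exact Or.inl hx
  by_cases hy : y = 0
  · exact Or.inr hy
  exfalso
  haveI hchL : CharP L 2 := charP_of_injective_ringHom (algebraMap (ZMod 2) L).injective 2
  haveI hchF : CharP F 2 := charP_of_injective_ringHom (algebraMap L F).injective 2
  -- basic facts
  have hadd : ∀ u v : F, (u + v) ^ (2 ^ m) = u ^ (2 ^ m) + v ^ (2 ^ m) :=
    fun u v => add_pow_char_pow ..
  have hq1 : ∀ u : F, (u ^ (2 ^ m)) ^ (2 ^ m) = u := by
    intro u
    have e : 2 ^ m * 2 ^ m = 2 ^ (2 * m) := by rw [← pow_add, two_mul]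
    rw [← pow_mul, e, ← hF]
    exact FiniteField.pow_card u
  have hLfix : ∀ c : L, (algebraMap L F c) ^ (2 ^ m) = algebraMap L F c := by
    intro c
    rw [← map_pow]
    congr 1
    conv_rhs => rw [← FiniteField.pow_card c, hL]
  have hflip : ∀ u v : F, u + v = 0 → u = v := by
    intro u v huv
    have := add_eq_zero_iff_eq_neg.mp huv
    rwa [CharTwo.neg_eq] at this
  have hTfix : ∀ u : F, (T u) ^ (2 ^ m) = T u := by
    intro u
    rw [hT u, hadd, hq1 u, add_comm]
  -- z is not fixed by the relative Frobenius
  have hzq : z ^ (2 ^ m) ≠ z := by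
    intro hzz
    obtain ⟨w, hw⟩ := fixed_mem m hm L F hL z hzz
    have hw2 : w ^ 2 + w = μ := by
      apply (algebraMap L F).injective
      rw [map_add, map_pow, hw, hz]
    have htr := congrArg (Algebra.trace (ZMod 2) L) hw2
    rw [map_add, trace_sq L hchL, hμ] at htr
    have h10 : (1 : ZMod 2) = 0 := by
      rw [← htr]
      exact CharTwo.add_self_eq_zero _
    simp at h10
  -- decompose
  have h0 := (hmul x y).symm.trans h
  have h1 : (T ((C1 * y ^ 2 ^ s + C2 * (y ^ 2 ^ m) ^ 2 ^ s) * x) +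
      algebraMap L F l * T ((C1 ^ 2 ^ m * y + C2 * y ^ 2 ^ m) * x ^ 2 ^ s) +
      T (x * y) * z) ^ (2 ^ m) = (0 : F) ^ (2 ^ m) := by rw [h0]
  rw [zero_pow (by positivity : (0:ℕ) < 2 ^ m).ne', hadd, hadd, mul_pow, mul_pow,
    hTfix, hTfix, hTfix, hLfix] at h1
  have hcancel : T (x * y) * z = T (x * y) * z ^ (2 ^ m) := add_left_cancel (h0.trans h1.symm)
  have hβ : T (x * y) = 0 := by
    by_contra hβne
    exact hzq (mul_left_cancel₀ hβne hcancel).symm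
  have hα : T ((C1 * y ^ 2 ^ s + C2 * (y ^ 2 ^ m) ^ 2 ^ s) * x) +
      algebraMap L F l * T ((C1 ^ 2 ^ m * y + C2 * y ^ 2 ^ m) * x ^ 2 ^ s) = 0 := by
    rw [hβ, zero_mul, add_zero] at h0
    exact h0
  -- (x*y) is fixed
  have ha : (x * y) ^ (2 ^ m) = x * y := by
    have hb := hβ
    rw [hT] at hb
    exact (hflip _ _ hb).symm
  have hxq0 : x ^ (2 ^ m) ≠ 0 := pow_ne_zero _ hx
  -- expansion of the two trace arguments under Frobenius
  have eW1 : ((C1 * y ^ 2 ^ s + C2 * (y ^ 2 ^ m) ^ 2 ^ s) * x) ^ (2 ^ m)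
      = (C1 ^ 2 ^ m * (y ^ 2 ^ m) ^ 2 ^ s + C2 ^ 2 ^ m * y ^ 2 ^ s) * x ^ 2 ^ m := by
    rw [mul_pow, hadd, mul_pow, mul_pow, pow_right_comm (y ^ 2 ^ m) (2 ^ s) (2 ^ m), hq1 y,
      pow_right_comm y (2 ^ s) (2 ^ m)]
  have eW2 : ((C1 ^ 2 ^ m * y + C2 * y ^ 2 ^ m) * x ^ 2 ^ s) ^ (2 ^ m)
      = (C1 * y ^ 2 ^ m + C2 ^ 2 ^ m * y) * (x ^ 2 ^ m) ^ 2 ^ s := by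
    rw [mul_pow, hadd, mul_pow, mul_pow, hq1 C1, hq1 y, pow_right_comm x (2 ^ s) (2 ^ m)]
  have eW0 : (C1 * x * (x ^ 2 ^ m) ^ 2 ^ s + C2 * x ^ (2 ^ s + 1)) ^ (2 ^ m)
      = C1 ^ 2 ^ m * x ^ 2 ^ m * x ^ 2 ^ s + C2 ^ 2 ^ m * (x ^ 2 ^ m) ^ (2 ^ s + 1) := by
    rw [hadd, mul_pow, mul_pow, mul_pow, pow_right_comm (x ^ 2 ^ m) (2 ^ s) (2 ^ m), hq1 x,
      pow_right_comm x (2 ^ s + 1) (2 ^ m)]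
  -- the nonzero quantity N
  have hN0 : C1 * x * (x ^ 2 ^ m) ^ 2 ^ s + C2 * x ^ (2 ^ s + 1) +
      (C1 ^ 2 ^ m * x ^ 2 ^ m * x ^ 2 ^ s + C2 ^ 2 ^ m * (x ^ 2 ^ m) ^ (2 ^ s + 1)) ≠ 0 := by
    have hN := hC x hx
    rw [hT, eW0] at hN
    exact hN
  -- expand hα
  rw [hT, hT, eW1, eW2] at hα
  -- relations
  have r1 : y * x = x * y := mul_comm y x
  have r2 : y ^ 2 ^ m * x ^ 2 ^ m = x * y := by rw [← mul_pow, mul_comm y x]; exact ha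
  have r3 : (y : F) ^ 2 ^ s * x ^ 2 ^ s = (x * y) ^ 2 ^ s := by rw [← mul_pow, mul_comm y x]
  have r4 : ((y : F) ^ 2 ^ m) ^ 2 ^ s * (x ^ 2 ^ m) ^ 2 ^ s = (x * y) ^ 2 ^ s := by
    rw [← mul_pow, ← mul_pow, mul_comm y x, ha]
  -- key identity
  have KEY : ((C1 * y ^ 2 ^ s + C2 * (y ^ 2 ^ m) ^ 2 ^ s) * x
      + (C1 ^ 2 ^ m * (y ^ 2 ^ m) ^ 2 ^ s + C2 ^ 2 ^ m * y ^ 2 ^ s) * x ^ 2 ^ m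
      + algebraMap L F l * ((C1 ^ 2 ^ m * y + C2 * y ^ 2 ^ m) * x ^ 2 ^ s
          + (C1 * y ^ 2 ^ m + C2 ^ 2 ^ m * y) * (x ^ 2 ^ m) ^ 2 ^ s))
      * (x * x ^ 2 ^ m) ^ (2 ^ s + 1)
      = (C1 * x * (x ^ 2 ^ m) ^ 2 ^ s + C2 * x ^ (2 ^ s + 1) +
          (C1 ^ 2 ^ m * x ^ 2 ^ m * x ^ 2 ^ s + C2 ^ 2 ^ m * (x ^ 2 ^ m) ^ (2 ^ s + 1)))
        * ((x * y) ^ 2 ^ s * (x * x ^ 2 ^ m)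
            + algebraMap L F l * (x * y) * (x * x ^ 2 ^ m) ^ 2 ^ s) := by
    linear_combination
      (C1 * x ^ 2 * (x ^ 2 ^ m) ^ (2 ^ s + 1) + C2 ^ 2 ^ m * x * (x ^ 2 ^ m) ^ (2 ^ s + 2)) * r3
      + (C2 * x ^ (2 ^ s + 2) * x ^ 2 ^ m + C1 ^ 2 ^ m * x ^ (2 ^ s + 1) * (x ^ 2 ^ m) ^ 2) * r4
      + algebraMap L F l * (C1 ^ 2 ^ m * x ^ (2 * 2 ^ s) * (x ^ 2 ^ m) ^ (2 ^ s + 1)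
          + C2 ^ 2 ^ m * x ^ 2 ^ s * (x ^ 2 ^ m) ^ (2 * 2 ^ s + 1)) * r1
      + algebraMap L F l * (C2 * x ^ (2 * 2 ^ s + 1) * (x ^ 2 ^ m) ^ 2 ^ s
          + C1 * x ^ (2 ^ s + 1) * (x ^ 2 ^ m) ^ (2 * 2 ^ s)) * r2
  rw [hα, zero_mul] at KEY
  have hG : (x * y) ^ 2 ^ s * (x * x ^ 2 ^ m)
      + algebraMap L F l * (x * y) * (x * x ^ 2 ^ m) ^ 2 ^ s = 0 := by
    rcases mul_eq_zero.mp KEY.symm with hcon | hok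
    · exact absurd hcon hN0
    · exact hok
  -- pass to the subfield
  have hn0 : x * x ^ 2 ^ m ≠ 0 := mul_ne_zero hx hxq0
  have ha0 : x * y ≠ 0 := mul_ne_zero hx hy
  have hnq : (x * x ^ 2 ^ m) ^ (2 ^ m) = x * x ^ 2 ^ m := by
    rw [mul_pow, hq1 x, mul_comm]
  set b : F := (x * y) * (x * x ^ 2 ^ m)⁻¹ with hbdef
  have hbn : b * (x * x ^ 2 ^ m) = x * y := by
    rw [hbdef, mul_assoc, inv_mul_cancel₀ hn0, mul_one]
  have hbσn : b ^ 2 ^ s * (x * x ^ 2 ^ m) ^ 2 ^ s = (x * y) ^ 2 ^ s := by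
    rw [← mul_pow, hbn]
  have hb0eq : (b ^ 2 ^ s + algebraMap L F l * b) * (x * x ^ 2 ^ m) ^ (2 ^ s + 1) = 0 := by
    linear_combination (x * x ^ 2 ^ m) * hbσn
      + algebraMap L F l * (x * x ^ 2 ^ m) ^ 2 ^ s * hbn + hG
  have hbσ : b ^ 2 ^ s + algebraMap L F l * b = 0 := by
    rcases mul_eq_zero.mp hb0eq with hok | hcon
    · exact hok
    · exact absurd hcon (pow_ne_zero _ hn0)
  have hb0 : b ≠ 0 := mul_ne_zero ha0 (inv_ne_zero hn0)
  have hbfix : b ^ (2 ^ m) = b := by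
    rw [hbdef, mul_pow, ha, inv_pow, hnq]
  obtain ⟨c, hc⟩ := fixed_mem m hm L F hL b hbfix
  have hc0 : c ≠ 0 := by
    intro hcc
    rw [hcc, map_zero] at hc
    exact hb0 hc.symm
  have hbl : b ^ 2 ^ s = algebraMap L F l * b := hflip _ _ hbσ
  have hcσ : c ^ 2 ^ s = l * c := by
    apply (algebraMap L F).injective
    rw [map_pow, map_mul, hc]
    exact hbl
  have h1σ : 1 ≤ 2 ^ s := Nat.one_le_two_pow
  have hfin : c ^ (2 ^ s - 1) * c = l * c := by
    rw [← pow_succ, Nat.sub_add_cancel h1σ]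
    exact hcσ
  exact hl' ⟨c, hc0, (mul_right_cancel₀ hc0 hfin).symm⟩
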